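/- The error-sum function E of Pierce expansions is continuous at every point of [0,1] that is not a rational number in (0,1); in particular, E is continuous Lebesgue-almost everywhere on [0,1]. -/

import Mathlib

open scoped BigOperators

/-- Reciprocal of an extended natural number as a real, with `1/∞ = 0`. -/
noncomputable def pinv (a : ℕ∞) : ℝ := ((a.toNat : ℕ) : ℝ)⁻¹

/-- First Pierce digit: `⌊1/x⌋` for `x ≠ 0`, and `∞` for `x = 0`. -/
noncomputable def pd1 (x : ℝ) : ℕ∞ := if x = 0 then ⊤ else (⌊x⁻¹⌋₊ : ℕ∞)

/-- Pierce map `T(x) = 1 - ⌊1/x⌋ x` for `x ≠ 0`, `T(0) = 0`. -/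
noncomputable def pT (x : ℝ) : ℝ := if x = 0 then 0 else 1 - (⌊x⁻¹⌋₊ : ℝ) * x

/-- `n`-th Pierce digit `d_n(x) = d_1(T^{n-1} x)` (for `n ≥ 1`). -/
noncomputable def pdig (n : ℕ) (x : ℝ) : ℕ∞ := pd1 (pT^[n-1] x)

/-- `1/(d_1(x) ⋯ d_n(x))`, with the convention that a factor `∞` makes it `0`. -/
noncomputable def pprodR (n : ℕ) (x : ℝ) : ℝ := ∏ k ∈ Finset.Icc 1 n, pinv (pdig k x)

/-- `n`-th partial sum `s_n(x)` of the Pierce expansion of `x`. -/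
noncomputable def psum (n : ℕ) (x : ℝ) : ℝ :=
  ∑ k ∈ Finset.Icc 1 n, (-1 : ℝ) ^ (k + 1) * pprodR k x

/-- The error-sum function of Pierce expansions `E(x) = Σ_{n≥1} (x - s_n(x))`. -/
noncomputable def pE (x : ℝ) : ℝ := ∑' n : ℕ, (x - psum (n + 1) x)

/-- A Pierce sequence (0-indexed: `σ k` is the paper's `σ_{k+1}`): terms are positive, strictly
increasing while finite, and once a term is `∞` all later terms are `∞`. -/
def IsPierce (σ : ℕ → ℕ∞) : Prop :=
  1 ≤ σ 0 ∧ ∀ n, σ n < σ (n + 1) ∨ (σ n = ⊤ ∧ σ (n + 1) = ⊤)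

/-- `n`-th partial sum `φ_n(σ)`. -/
noncomputable def pphiN (n : ℕ) (σ : ℕ → ℕ∞) : ℝ :=
  ∑ k ∈ Finset.range n, (-1 : ℝ) ^ k * ∏ i ∈ Finset.range (k + 1), pinv (σ i)

/-- `φ(σ) = Σ_{k≥1} (-1)^{k+1}/(σ_1 ⋯ σ_k)`. -/
noncomputable def pphi (σ : ℕ → ℕ∞) : ℝ :=
  ∑' k : ℕ, (-1 : ℝ) ^ k * ∏ i ∈ Finset.range (k + 1), pinv (σ i)

/-- The error-sum function of Pierce sequences `E*(σ) = Σ_{n≥1} (φ(σ) - φ_n(σ))`. -/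
noncomputable def pEstar (σ : ℕ → ℕ∞) : ℝ := ∑' n : ℕ, (pphi σ - pphiN (n + 1) σ)

/-- The series formula `Σ_{n≥1} (-1)^n n/(σ_1 ⋯ σ_{n+1})` for the error-sum of a sequence. -/
noncomputable def pEstarSeries (σ : ℕ → ℕ∞) : ℝ :=
  ∑' n : ℕ, (-1 : ℝ) ^ (n + 1) * (n + 1) * ∏ i ∈ Finset.range (n + 2), pinv (σ i)

/-- The metric `ρ(x,y) = 1/x + 1/y` for `x ≠ y` (with `1/∞ = 0`), `ρ(x,x) = 0`. -/
noncomputable def prho (x y : ℕ∞) : ℝ := if x = y then 0 else pinv x + pinv y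

/-- The metric `ρ^ℕ(σ,τ) = Σ_{n≥1} ρ(σ_n, τ_n)/n!` on sequences. -/
noncomputable def prhoN (σ τ : ℕ → ℕ∞) : ℝ :=
  ∑' n : ℕ, prho (σ n) (τ n) / ((n + 1).factorial : ℝ)

section Aux

open Filter Set Topology

lemma pinv_nonneg' (a : ℕ∞) : 0 ≤ pinv a := by
  unfold pinv; positivity

lemma pinv_top : pinv ⊤ = 0 := by simp [pinv]

lemma pinv_coe (n : ℕ) : pinv (n : ℕ∞) = (n : ℝ)⁻¹ := by simp [pinv]

lemma pT_zero : pT 0 = 0 := by simp [pT]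

lemma pT_iter_zero (n : ℕ) : pT^[n] 0 = 0 :=
  Function.iterate_fixed pT_zero n

lemma pT_nonneg {x : ℝ} (hx : 0 < x) : 0 ≤ pT x := by
  have h1 : (⌊x⁻¹⌋₊ : ℝ) ≤ x⁻¹ := Nat.floor_le (by positivity)
  have h2 : (⌊x⁻¹⌋₊ : ℝ) * x ≤ x⁻¹ * x := by
    exact mul_le_mul_of_nonneg_right h1 hx.le
  rw [pT, if_neg hx.ne']
  have : x⁻¹ * x = 1 := inv_mul_cancel₀ hx.ne'
  linarith

lemma pT_lt_self {x : ℝ} (hx : 0 < x) : pT x < x := by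
  have h1 : x⁻¹ < ⌊x⁻¹⌋₊ + 1 := Nat.lt_floor_add_one _
  have h2 : x⁻¹ * x < (⌊x⁻¹⌋₊ + 1 : ℝ) * x := by
    exact mul_lt_mul_of_pos_right h1 hx
  rw [pT, if_neg hx.ne']
  have : x⁻¹ * x = 1 := inv_mul_cancel₀ hx.ne'
  nlinarith

lemma pT_mem {x : ℝ} (hx : x ∈ Set.Icc (0:ℝ) 1) : pT x ∈ Set.Icc (0:ℝ) 1 := by
  rcases eq_or_lt_of_le hx.1 with h | h
  · simp [← h, pT_zero]
  · exact ⟨pT_nonneg h, le_trans (pT_lt_self h).le hx.2⟩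

lemma pT_iter_mem {x : ℝ} (hx : x ∈ Set.Icc (0:ℝ) 1) (n : ℕ) :
    pT^[n] x ∈ Set.Icc (0:ℝ) 1 := by
  induction n with
  | zero => simpa using hx
  | succ n ih => rw [Function.iterate_succ_apply']; exact pT_mem ih

lemma pT_le_self {x : ℝ} (hx : x ∈ Set.Icc (0:ℝ) 1) : pT x ≤ x := by
  rcases eq_or_lt_of_le hx.1 with h | h
  · simp [← h, pT_zero]
  · exact (pT_lt_self h).le

lemma pT_iter_le {x : ℝ} (hx : x ∈ Set.Icc (0:ℝ) 1) (n : ℕ) : pT^[n] x ≤ x := by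
  induction n with
  | zero => simp
  | succ n ih =>
      rw [Function.iterate_succ_apply']
      exact le_trans (pT_le_self (pT_iter_mem hx n)) ih

lemma pT_iter_ne_zero {x : ℝ} {n : ℕ} (h : pT^[n] x ≠ 0) {k : ℕ} (hk : k ≤ n) :
    pT^[k] x ≠ 0 := by
  intro h0
  apply h
  obtain ⟨m, rfl⟩ := Nat.exists_eq_add_of_le hk
  rw [add_comm, Function.iterate_add_apply, h0, pT_iter_zero]

lemma pdig_succ (n : ℕ) (x : ℝ) : pdig (n+1) x = pd1 (pT^[n] x) := by
  simp [pdig]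

lemma pprodR_zero (x : ℝ) : pprodR 0 x = 1 := by simp [pprodR]

lemma pprodR_succ (n : ℕ) (x : ℝ) :
    pprodR (n+1) x = pprodR n x * pinv (pdig (n+1) x) := by
  unfold pprodR
  exact Finset.prod_Icc_succ_top (Nat.succ_le_succ (Nat.zero_le n)) _

lemma pprodR_nonneg (n : ℕ) (x : ℝ) : 0 ≤ pprodR n x :=
  Finset.prod_nonneg fun i _ => pinv_nonneg' _

lemma psum_zero' (x : ℝ) : psum 0 x = 0 := by simp [psum]

lemma psum_succ (n : ℕ) (x : ℝ) :
    psum (n+1) x = psum n x + (-1:ℝ)^(n+2) * pprodR (n+1) x := by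
  unfold psum
  exact Finset.sum_Icc_succ_top (Nat.succ_le_succ (Nat.zero_le n)) _

/-- Key identity. -/
lemma key_identity {x : ℝ} (hx : x ∈ Set.Icc (0:ℝ) 1) (n : ℕ) :
    x - psum n x = (-1:ℝ)^n * pT^[n] x * pprodR n x := by
  induction n with
  | zero => simp [psum_zero', pprodR_zero]
  | succ n ih =>
      set y := pT^[n] x with hy
      have hysucc : pT^[n+1] x = pT y := Function.iterate_succ_apply' pT n x
      rcases eq_or_ne y 0 with h0 | h0
      · have hd : pdig (n+1) x = ⊤ := by rw [pdig_succ, ← hy, h0]; simp [pd1]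
        have hp : pprodR (n+1) x = 0 := by rw [pprodR_succ, hd, pinv_top, mul_zero]
        have : pT^[n+1] x = 0 := by rw [hysucc, h0, pT_zero]
        rw [psum_succ, hp, this]
        rw [h0] at ih
        linear_combination ih
      · have hymem := pT_iter_mem hx n
        have hy0 : 0 < y := lt_of_le_of_ne hymem.1 (Ne.symm h0)
        set d := ⌊y⁻¹⌋₊ with hd
        have hd1 : 1 ≤ d := by
          rw [hd]
          apply Nat.le_floor
          rw [Nat.cast_one]
          exact one_le_inv_iff₀.mpr ⟨hy0, hymem.2⟩
        have hdne : (d:ℝ) ≠ 0 := by positivity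
        have hdig : pdig (n+1) x = (d : ℕ∞) := by
          rw [pdig_succ, ← hy, pd1, if_neg h0]
        have hTy : pT y = 1 - (d:ℝ) * y := by rw [pT, if_neg h0]
        rw [psum_succ, pprodR_succ, hdig, pinv_coe, hysucc, hTy]
        linear_combination ih - ((-1:ℝ)^n * pprodR n x * y) * (mul_inv_cancel₀ hdne)

/-- Digit lower bound. -/
lemma dig_lb {x : ℝ} (hx : x ∈ Set.Icc (0:ℝ) 1) :
    ∀ k, pT^[k] x ≠ 0 → (k + 1) ≤ ⌊(pT^[k] x)⁻¹⌋₊ := by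
  intro k
  induction k with
  | zero =>
      intro h
      have hx0 : 0 < x := lt_of_le_of_ne hx.1 (by simpa using Ne.symm h)
      simp only [Function.iterate_zero, id_eq]
      apply Nat.le_floor
      rw [Nat.cast_one]
      exact one_le_inv_iff₀.mpr ⟨hx0, hx.2⟩
  | succ k ih =>
      intro h
      have hk : pT^[k] x ≠ 0 := pT_iter_ne_zero h (Nat.le_succ k)
      have hlb := ih hk
      set y := pT^[k] x with hy
      have hymem := pT_iter_mem hx k
      have hy0 : 0 < y := lt_of_le_of_ne hymem.1 (Ne.symm hk)
      set d := ⌊y⁻¹⌋₊ with hd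
      have hysucc : pT^[k+1] x = pT y := Function.iterate_succ_apply' pT k x
      have hTy : pT y = 1 - (d:ℝ) * y := by rw [pT, if_neg hk]
      have hT0 : 0 < pT y := by
        rw [← hysucc]
        exact lt_of_le_of_ne (pT_iter_mem hx (k+1)).1 (Ne.symm h)
      have hygt : ((d:ℝ) + 1)⁻¹ < y := by
        have h1 : y⁻¹ < (d:ℝ) + 1 := by
          have := Nat.lt_floor_add_one (y⁻¹); push_cast at this ⊢; linarith
        have hdpos : (0:ℝ) < (d:ℝ) + 1 := by positivity
        calc ((d:ℝ)+1)⁻¹ < (y⁻¹)⁻¹ := by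
              apply inv_strictAnti₀ (by positivity) h1
          _ = y := inv_inv y
      have hd1 : (1:ℝ) ≤ (d:ℝ) := by
        have : 1 ≤ d := by
          apply Nat.le_floor; rw [Nat.cast_one]
          exact one_le_inv_iff₀.mpr ⟨hy0, hymem.2⟩
        exact_mod_cast this
      have hkey : pT y * ((d:ℝ) + 1) < 1 := by
        rw [hTy]
        have h2 : (d:ℝ) * ((d:ℝ)+1)⁻¹ < (d:ℝ) * y :=
          mul_lt_mul_of_pos_left hygt (by linarith)
        have h3 : (d:ℝ) * ((d:ℝ)+1)⁻¹ = 1 - (((d:ℝ)+1))⁻¹ := by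
          field_simp
          ring
        have h4 : ((d:ℝ)+1) * (((d:ℝ)+1))⁻¹ = 1 := by
          field_simp
        nlinarith
      rw [hysucc]
      apply Nat.le_floor
      have h5 : (pT y)⁻¹ * (pT y * ((d:ℝ)+1)) < (pT y)⁻¹ * 1 :=
        mul_lt_mul_of_pos_left hkey (inv_pos.mpr hT0)
      have h6 : (pT y)⁻¹ * (pT y * ((d:ℝ)+1)) = ((d:ℝ)+1) := by
        field_simp
      have hlb' : ((k:ℝ)+1) ≤ (d:ℝ) := by exact_mod_cast hlb
      push_cast
      linarith

/-- Product bound. -/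
lemma pprodR_le {x : ℝ} (hx : x ∈ Set.Icc (0:ℝ) 1) {n : ℕ} (h : pT^[n] x ≠ 0) :
    pprodR n x ≤ ((n.factorial : ℝ))⁻¹ := by
  have hbound : ∀ k ∈ Finset.Icc 1 n, pinv (pdig k x) ≤ ((k:ℝ))⁻¹ := by
    intro k hk
    rw [Finset.mem_Icc] at hk
    obtain ⟨hk1, hkn⟩ := hk
    obtain ⟨j, rfl⟩ := Nat.exists_eq_add_of_le hk1
    have hj : pT^[j] x ≠ 0 := pT_iter_ne_zero h (by omega)
    have hlb := dig_lb hx j hj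
    have hdig : pdig (1+j) x = (⌊(pT^[j] x)⁻¹⌋₊ : ℕ∞) := by
      rw [add_comm, pdig_succ, pd1, if_neg hj]
    rw [hdig, pinv_coe]
    have h2 : ((1+j:ℕ):ℝ) ≤ (⌊(pT^[j] x)⁻¹⌋₊ : ℝ) := by
      exact_mod_cast (by omega : 1 + j ≤ ⌊(pT^[j] x)⁻¹⌋₊)
    exact inv_anti₀ (by positivity) h2
  calc pprodR n x ≤ ∏ k ∈ Finset.Icc 1 n, ((k:ℝ))⁻¹ :=
        Finset.prod_le_prod (fun i _ => pinv_nonneg' _) hbound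
    _ = ((n.factorial : ℝ))⁻¹ := by
        have hprod : (∏ k ∈ Finset.Icc 1 n, (k:ℝ)) = (n.factorial : ℝ) := by
          rw [← Nat.cast_prod]
          congr 1
          rw [← Finset.Ico_add_one_right_eq_Icc]
          exact Finset.prod_Ico_id_eq_factorial n
        rw [Finset.prod_inv_distrib, hprod]

/-- Main bound. -/
lemma abs_bound {x : ℝ} (hx : x ∈ Set.Icc (0:ℝ) 1) (n : ℕ) :
    |x - psum n x| ≤ pT^[n] x * ((n.factorial : ℝ))⁻¹ := by
  rw [key_identity hx n]
  have hT := (pT_iter_mem hx n).1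
  rcases eq_or_ne (pT^[n] x) 0 with h0 | h0
  · rw [h0]; simp
  · have hP := pprodR_le hx h0
    have hPn := pprodR_nonneg n x
    rw [abs_mul, abs_mul]
    have h1 : |(-1:ℝ)^n| = 1 := by
      rw [abs_pow, abs_neg, abs_one, one_pow]
    rw [h1, one_mul, abs_of_nonneg hT, abs_of_nonneg hPn]
    exact mul_le_mul_of_nonneg_left hP hT

lemma summable_inv_factorial : Summable (fun n : ℕ => ((n.factorial : ℝ))⁻¹) := by
  have := Real.summable_pow_div_factorial 1
  simpa using this

lemma summable_inv_factorial_succ :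
    Summable (fun n : ℕ => (((n+1).factorial : ℝ))⁻¹) :=
  (summable_nat_add_iff 1).mpr summable_inv_factorial

/-- Local structure near an irrational point of (0,1). -/
lemma pd1_loc {x : ℝ} (hx : x ∈ Set.Ioo (0:ℝ) 1) (hirr : Irrational x) :
    ∀ᶠ y in 𝓝 x, pd1 y = pd1 x ∧ pT y = 1 - (⌊x⁻¹⌋₊ : ℝ) * y ∧ y ∈ Set.Ioo (0:ℝ) 1 := by
  set d := ⌊x⁻¹⌋₊ with hd
  have hx0 : 0 < x := hx.1
  have hd1 : 1 ≤ d := by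
    apply Nat.le_floor; rw [Nat.cast_one]
    exact one_le_inv_iff₀.mpr ⟨hx0, hx.2.le⟩
  have hinv_irr : Irrational x⁻¹ := hirr.inv
  have hlt : (d:ℝ) < x⁻¹ :=
    lt_of_le_of_ne (Nat.floor_le (by positivity)) (Ne.symm (hinv_irr.ne_nat d))
  have hgt : x⁻¹ < (d:ℝ) + 1 := by
    have := Nat.lt_floor_add_one (x⁻¹); push_cast at this ⊢; linarith
  have hc : ContinuousAt (fun y : ℝ => y⁻¹) x := continuousAt_inv₀ hx0.ne'
  have h1 : ∀ᶠ y in 𝓝 x, (d:ℝ) < y⁻¹ := hc (Ioi_mem_nhds hlt)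
  have h2 : ∀ᶠ y in 𝓝 x, y⁻¹ < (d:ℝ) + 1 := hc (Iio_mem_nhds hgt)
  have h3 : ∀ᶠ y in 𝓝 x, y ∈ Set.Ioo (0:ℝ) 1 := isOpen_Ioo.eventually_mem hx
  filter_upwards [h1, h2, h3] with y hy1 hy2 hy3
  have hy0 : y ≠ 0 := hy3.1.ne'
  have hfl : ⌊y⁻¹⌋₊ = d := by
    rw [Nat.floor_eq_iff' (by omega)]
    constructor
    · exact hy1.le
    · push_cast; exact hy2
  refine ⟨?_, ?_, hy3⟩
  · rw [pd1, if_neg hy0, pd1, if_neg hx0.ne', hfl]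
  · rw [pT, if_neg hy0, hfl]

/-- One step preserves irrationality and membership in (0,1). -/
lemma pT_irr {x : ℝ} (hx : x ∈ Set.Ioo (0:ℝ) 1) (hirr : Irrational x) :
    pT x ∈ Set.Ioo (0:ℝ) 1 ∧ Irrational (pT x) := by
  have hx0 : 0 < x := hx.1
  set d := ⌊x⁻¹⌋₊ with hd
  have hd1 : 1 ≤ d := by
    apply Nat.le_floor; rw [Nat.cast_one]
    exact one_le_inv_iff₀.mpr ⟨hx0, hx.2.le⟩
  have hTx : pT x = 1 - (d:ℝ) * x := by rw [pT, if_neg hx0.ne']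
  have hirrT : Irrational (pT x) := by
    rw [hTx]
    have h1 : Irrational ((d:ℝ) * x) := hirr.natCast_mul (by omega)
    have := h1.natCast_sub 1
    simpa using this
  refine ⟨⟨?_, ?_⟩, hirrT⟩
  · exact lt_of_le_of_ne (pT_nonneg hx0) (Ne.symm hirrT.ne_zero)
  · exact lt_trans (pT_lt_self hx0) hx.2

/-- Iterates at an irrational point: membership, irrationality, continuity. -/
lemma pT_iter_good {x : ℝ} (hx : x ∈ Set.Ioo (0:ℝ) 1) (hirr : Irrational x) (n : ℕ) :
    (pT^[n] x ∈ Set.Ioo (0:ℝ) 1 ∧ Irrational (pT^[n] x)) ∧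
      ContinuousAt (pT^[n]) x := by
  induction n with
  | zero => exact ⟨⟨by simpa using hx, by simpa using hirr⟩, by simpa using continuousAt_id⟩
  | succ n ih =>
      obtain ⟨⟨hmem, hirr'⟩, hcont⟩ := ih
      have hstep := pT_irr hmem hirr'
      constructor
      · rw [Function.iterate_succ_apply']
        exact hstep
      · have hTc : ContinuousAt pT (pT^[n] x) := by
          have hloc := pd1_loc hmem hirr'
          have haff : ContinuousAt (fun y : ℝ => 1 - (⌊(pT^[n] x)⁻¹⌋₊ : ℝ) * y) (pT^[n] x) := by
            fun_prop
          apply haff.congr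
          filter_upwards [hloc] with y hy using hy.2.1.symm
        have : ContinuousAt (pT ∘ pT^[n]) x := hTc.comp hcont
        have heq : pT^[n+1] = pT ∘ pT^[n] := by
          funext y; exact Function.iterate_succ_apply' pT n y
        rw [heq]
        exact this

/-- Digits are locally constant at irrational points. -/
lemma pdig_loc_const {x : ℝ} (hx : x ∈ Set.Ioo (0:ℝ) 1) (hirr : Irrational x) (k : ℕ)
    (hk : 1 ≤ k) : ∀ᶠ y in 𝓝 x, pdig k y = pdig k x := by
  obtain ⟨j, rfl⟩ := Nat.exists_eq_add_of_le hk
  obtain ⟨⟨hmem, hirr'⟩, hcont⟩ := pT_iter_good hx hirr j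
  have hloc := pd1_loc hmem hirr'
  have := hcont.eventually (by exact hloc)
  filter_upwards [this] with y hy
  rw [add_comm, pdig_succ, pdig_succ, hy.1]

/-- `psum` is locally constant at irrational points. -/
lemma psum_loc_const {x : ℝ} (hx : x ∈ Set.Ioo (0:ℝ) 1) (hirr : Irrational x) (m : ℕ) :
    ∀ᶠ y in 𝓝 x, psum m y = psum m x := by
  have h : ∀ᶠ y in 𝓝 x, ∀ k ∈ Finset.Icc 1 m, pdig k y = pdig k x := by
    rw [Filter.eventually_all_finset]
    intro k hk
    rw [Finset.mem_Icc] at hk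
    exact pdig_loc_const hx hirr k hk.1
  filter_upwards [h] with y hy
  unfold psum pprodR
  apply Finset.sum_congr rfl
  intro k hk
  congr 1
  apply Finset.prod_congr rfl
  intro i hi
  rw [Finset.mem_Icc] at hi hk
  rw [hy i (Finset.mem_Icc.mpr ⟨hi.1, le_trans hi.2 hk.2⟩)]

/-- psum at 0. -/
lemma psum_at_zero (m : ℕ) : psum m 0 = 0 := by
  unfold psum
  apply Finset.sum_eq_zero
  intro k hk
  rw [Finset.mem_Icc] at hk
  have : pprodR k 0 = 0 := by
    unfold pprodR
    apply Finset.prod_eq_zero (Finset.mem_Icc.mpr ⟨le_refl 1, hk.1⟩)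
    have : pdig 1 0 = ⊤ := by
      have : pdig 1 0 = pd1 (pT^[0] 0) := by simp [pdig]
      rw [this]; simp [pd1]
    rw [this, pinv_top]
  rw [this, mul_zero]

lemma pE_zero : pE 0 = 0 := by
  unfold pE
  convert tsum_zero with n
  rw [psum_at_zero]; ring

lemma pT_one : pT 1 = 0 := by norm_num [pT]

/-- psum at 1. -/
lemma psum_at_one {m : ℕ} (hm : 1 ≤ m) : psum m 1 = 1 := by
  unfold psum
  rw [Finset.sum_eq_single 1]
  · have h1 : pdig 1 1 = (1 : ℕ∞) := by
      have : pdig 1 1 = pd1 (pT^[0] 1) := by simp [pdig]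
      rw [this]
      simp [pd1]
    have : pprodR 1 1 = 1 := by
      unfold pprodR
      rw [Finset.Icc_self, Finset.prod_singleton, h1]
      simp [pinv]
    rw [this]; norm_num
  · intro k hk hk1
    rw [Finset.mem_Icc] at hk
    have hk2 : 2 ≤ k := by omega
    have : pprodR k 1 = 0 := by
      unfold pprodR
      apply Finset.prod_eq_zero (Finset.mem_Icc.mpr ⟨(by omega : 1 ≤ 2), hk2⟩)
      have h2 : pdig 2 1 = ⊤ := by
        have : pdig 2 1 = pd1 (pT^[1] 1) := by simp [pdig]
        rw [this]
        simp [pT_one, pd1]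
      rw [h2, pinv_top]
    rw [this, mul_zero]
  · intro h
    exact absurd (Finset.mem_Icc.mpr ⟨le_refl 1, hm⟩) h

/-- Continuity-within helper from uniform convergence. -/
lemma cwa_of_unif {f : ℕ → ℝ → ℝ} {g : ℝ → ℝ} {s : Set ℝ} {x : ℝ} (hx : x ∈ s)
    (hu : TendstoUniformlyOn f g Filter.atTop s)
    (hc : ∀ N, ContinuousWithinAt (f N) s x) :
    ContinuousWithinAt g s x := by
  apply continuousWithinAt_of_locally_uniform_approx_of_continuousWithinAt hx
  intro u hu'
  obtain ⟨N, hN⟩ := (hu u hu').exists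
  exact ⟨s, self_mem_nhdsWithin, f N, hc N, fun y hy => hN y hy⟩

end Aux

open Filter Set Topology


theorem stmt14 :
    (∀ x ∈ Set.Icc (0 : ℝ) 1,
      x ∉ {y : ℝ | (∃ q : ℚ, (q : ℝ) = y) ∧ y ∈ Set.Ioo (0 : ℝ) 1} →
      ContinuousWithinAt pE (Set.Icc (0 : ℝ) 1) x) ∧
    (∀ᵐ x ∂(MeasureTheory.volume.restrict (Set.Icc (0 : ℝ) 1)),
      ContinuousWithinAt pE (Set.Icc (0 : ℝ) 1) x) := by
  have main : ∀ x ∈ Set.Icc (0 : ℝ) 1,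
      x ∉ {y : ℝ | (∃ q : ℚ, (q : ℝ) = y) ∧ y ∈ Set.Ioo (0 : ℝ) 1} →
      ContinuousWithinAt pE (Set.Icc (0 : ℝ) 1) x := by
    intro x hx hxs
    have hbound : ∀ (n : ℕ) (y : ℝ), y ∈ Set.Icc (0:ℝ) 1 →
        ‖y - psum (n+1) y‖ ≤ (((n+1).factorial : ℝ))⁻¹ := by
      intro n y hy
      have h1 := abs_bound hy (n+1)
      have hT := pT_iter_mem hy (n+1)
      calc ‖y - psum (n+1) y‖ ≤ pT^[n+1] y * (((n+1).factorial:ℝ))⁻¹ := h1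
        _ ≤ 1 * (((n+1).factorial:ℝ))⁻¹ :=
            mul_le_mul_of_nonneg_right hT.2 (by positivity)
        _ = _ := one_mul _
    have hpE : pE = fun y : ℝ => ∑' n : ℕ, (y - psum (n+1) y) := rfl
    have huc : TendstoUniformlyOn
        (fun N y => ∑ n ∈ Finset.range N, (y - psum (n+1) y))
        pE Filter.atTop (Set.Icc (0:ℝ) 1) := by
      rw [hpE]
      exact tendstoUniformlyOn_tsum_nat summable_inv_factorial_succ hbound
    have hFcwa : ∀ n : ℕ,
        ContinuousWithinAt (fun y => y - psum (n+1) y) (Set.Icc (0:ℝ) 1) x := by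
      intro n
      rcases eq_or_ne x 0 with rfl | hx0
      · -- at 0
        have hF0 : (0:ℝ) - psum (n+1) 0 = 0 := by rw [psum_at_zero]; ring
        rw [ContinuousWithinAt, hF0]
        apply squeeze_zero_norm'
          (a := fun y => y * (((n+1).factorial : ℝ))⁻¹)
        · filter_upwards [self_mem_nhdsWithin] with y hy
          calc ‖y - psum (n+1) y‖ ≤ pT^[n+1] y * (((n+1).factorial:ℝ))⁻¹ :=
                abs_bound hy (n+1)
            _ ≤ y * (((n+1).factorial:ℝ))⁻¹ :=
                mul_le_mul_of_nonneg_right (pT_iter_le hy (n+1)) (by positivity)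
        · have hcont : Continuous (fun y : ℝ => y * (((n+1).factorial : ℝ))⁻¹) := by
            fun_prop
          have := (hcont.tendsto (0:ℝ)).mono_left
            (nhdsWithin_le_nhds (s := Set.Icc (0:ℝ) 1))
          simpa using this
      rcases eq_or_ne x 1 with rfl | hx1
      · -- at 1
        have hF1 : (1:ℝ) - psum (n+1) 1 = 0 := by
          rw [psum_at_one (by omega)]; ring
        rw [ContinuousWithinAt, hF1]
        apply squeeze_zero_norm'
          (a := fun y => (1 - y) * (((n+1).factorial : ℝ))⁻¹)
        · have hIoi : Set.Ioi (1/2 : ℝ) ∈ nhdsWithin 1 (Set.Icc (0:ℝ) 1) :=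
            nhdsWithin_le_nhds (Ioi_mem_nhds (by norm_num))
          filter_upwards [self_mem_nhdsWithin, hIoi] with y hy hy2
          have hy0 : 0 < y := lt_trans (by norm_num) hy2
          have hfl : ⌊y⁻¹⌋₊ = 1 := by
            rw [Nat.floor_eq_iff' one_ne_zero]
            constructor
            · rw [Nat.cast_one]
              nlinarith [mul_inv_cancel₀ hy0.ne', hy.2, inv_nonneg.mpr hy0.le]
            · push_cast
              have h2 : ((2:ℝ))⁻¹ < y := by
                rw [show ((2:ℝ))⁻¹ = 1/2 by norm_num]; exact hy2
              have h3 := inv_strictAnti₀ (by norm_num : (0:ℝ) < (2:ℝ)⁻¹) h2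
              rw [inv_inv] at h3
              linarith
          have hTy : pT y = 1 - y := by
            rw [pT, if_neg hy0.ne', hfl]; push_cast; ring
          have hchain : pT^[n+1] y ≤ 1 - y := by
            rw [Function.iterate_succ_apply, hTy]
            have hmem : (1 - y) ∈ Set.Icc (0:ℝ) 1 := by
              exact ⟨by linarith [hy.2], by linarith [hy0]⟩
            exact pT_iter_le hmem n
          calc ‖y - psum (n+1) y‖ ≤ pT^[n+1] y * (((n+1).factorial:ℝ))⁻¹ :=
                abs_bound hy (n+1)
            _ ≤ (1 - y) * (((n+1).factorial:ℝ))⁻¹ :=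
                mul_le_mul_of_nonneg_right hchain (by positivity)
        · have h0 : Tendsto (fun y : ℝ => (1 - y) * (((n+1).factorial : ℝ))⁻¹)
              (nhds 1) (nhds ((1 - 1) * (((n+1).factorial : ℝ))⁻¹)) := by
            exact ((continuous_const.sub continuous_id).mul continuous_const).tendsto 1
          have := h0.mono_left (nhdsWithin_le_nhds (s := Set.Icc (0:ℝ) 1))
          simpa using this
      · -- irrational point in (0,1)
        have hxIoo : x ∈ Set.Ioo (0:ℝ) 1 := by
          constructor
          · exact lt_of_le_of_ne hx.1 (Ne.symm hx0)
          · exact lt_of_le_of_ne hx.2 hx1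
        have hirr : Irrational x := by
          rintro ⟨q, hq⟩
          exact hxs ⟨⟨q, hq⟩, hxIoo⟩
        have hps := psum_loc_const hxIoo hirr (n+1)
        have hc1 : ContinuousAt (fun y => psum (n+1) y) x := by
          apply continuousAt_const.congr
          filter_upwards [hps] with y hy using hy.symm
        exact (continuousAt_id.sub hc1).continuousWithinAt
    apply cwa_of_unif hx huc
    intro N
    exact tendsto_finset_sum _ (fun n _ => hFcwa n)
  refine ⟨main, ?_⟩
  have hS : MeasureTheory.volume
      {y : ℝ | (∃ q : ℚ, (q : ℝ) = y) ∧ y ∈ Set.Ioo (0:ℝ) 1} = 0 := by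
    apply MeasureTheory.measure_mono_null
      (show {y : ℝ | (∃ q : ℚ, (q : ℝ) = y) ∧ y ∈ Set.Ioo (0:ℝ) 1} ⊆
        Set.range ((↑) : ℚ → ℝ) from fun y hy => hy.1)
    exact (Set.countable_range _).measure_zero _
  have h1 : ∀ᵐ y ∂(MeasureTheory.volume : MeasureTheory.Measure ℝ),
      y ∉ {y : ℝ | (∃ q : ℚ, (q : ℝ) = y) ∧ y ∈ Set.Ioo (0:ℝ) 1} := by
    rw [MeasureTheory.ae_iff]
    convert hS using 2
    simp
  have h2 := MeasureTheory.ae_restrict_of_ae (s := Set.Icc (0:ℝ) 1) h1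
  have h3 : ∀ᵐ y ∂(MeasureTheory.volume.restrict (Set.Icc (0:ℝ) 1)),
      y ∈ Set.Icc (0:ℝ) 1 :=
    MeasureTheory.ae_restrict_mem measurableSet_Icc
  filter_upwards [h2, h3] with y hy1 hy2 using main y hy2 hy1
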